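/- For any R-module M, the natural map from M to the direct product of all its finitely embedded quotient modules (indexed by the class of such quotients, which forms a set up to the natural identification) is a pure monomorphism. -/

import Mathlib

universe u

/-- A linear map is a pure monomorphism if it is injective and remains injective after
tensoring with every `R`-module. -/
def IsPureMono (R : Type u) [CommRing R] {M N : Type u} [AddCommGroup M] [Module R M]
    [AddCommGroup N] [Module R N] (f : M →ₗ[R] N) : Prop :=
  Function.Injective f ∧
    ∀ (L : Type u) [AddCommGroup L] [Module R L], Function.Injective (LinearMap.rTensor L f)

/-- A module `D` is pure injective if every homomorphism into `D` extends along every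
pure monomorphism. -/
def IsPureInjective (R : Type u) [CommRing R] (D : Type u) [AddCommGroup D] [Module R D] :
    Prop :=
  ∀ (M N : Type u) [AddCommGroup M] [Module R M] [AddCommGroup N] [Module R N]
    (f : M →ₗ[R] N), IsPureMono R f → ∀ g : M →ₗ[R] D, ∃ h : N →ₗ[R] D, h ∘ₗ f = g

/-- A module is finitely embedded if it embeds into the injective envelope of a direct sum
of finitely many simple modules, i.e. into an injective module which is an essential
extension of a finitely generated semisimple submodule. -/
def FinitelyEmbedded (R : Type u) [CommRing R] (M : Type u) [AddCommGroup M] [Module R M] :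
    Prop :=
  ∃ E : ModuleCat.{u} R, Module.Injective R E ∧
    ∃ S : Submodule R E, IsSemisimpleModule R S ∧ S.FG ∧
      (∀ P : Submodule R E, P ≠ ⊥ → S ⊓ P ≠ ⊥) ∧
      ∃ f : M →ₗ[R] E, Function.Injective f

/-- The natural map from `M` to the product of all its finitely embedded quotient modules. -/
noncomputable def toFinitelyEmbeddedQuotients (R : Type u) [CommRing R] (M : Type u)
    [AddCommGroup M] [Module R M] :
    M →ₗ[R] ∀ K : {K : Submodule R M // FinitelyEmbedded R (M ⧸ K)}, M ⧸ K.1 :=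
  LinearMap.pi fun K => K.1.mkQ

open CategoryTheory
open scoped TensorProduct

section Aux
variable {R : Type u} [CommRing R]

lemma exists_injective_embedding (A : Type u) [AddCommGroup A] [Module R A] :
    ∃ (I : Type u) (_ : AddCommGroup I) (_ : Module R I), ∃ (j : A →ₗ[R] I),
      Module.Injective R I ∧ Function.Injective j := by
  let MA : ModuleCat.{u} R := ModuleCat.of R A
  let I := Injective.under MA
  haveI : Injective (ModuleCat.of R ↑I) := by
    have : ModuleCat.of R ↑I = I := rfl
    rw [this]; infer_instance
  refine ⟨I, inferInstance, inferInstance, (Injective.ι MA).hom, ?_, ?_⟩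
  · exact Module.injective_module_of_injective_object R I
  · exact (ModuleCat.mono_iff_injective (Injective.ι MA)).mp inferInstance

/-- Every module has an injective essential extension (injective hull). -/
lemma exists_injective_essential_extension (A : Type u) [AddCommGroup A] [Module R A] :
    ∃ (E' : Type u) (_ : AddCommGroup E') (_ : Module R E'), ∃ (i : A →ₗ[R] E'),
      Module.Injective R E' ∧ Function.Injective i ∧
      ∀ x : E', x ≠ 0 → ∃ r : R, r • x ∈ LinearMap.range i ∧ r • x ≠ 0 := by
  obtain ⟨I, _, _, j, hI, hj⟩ := exists_injective_embedding (R := R) A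
  set A' : Submodule R I := LinearMap.range j with hA'
  -- essential extensions of A' inside I
  set s : Set (Submodule R I) :=
    {W | A' ≤ W ∧ ∀ x ∈ W, x ≠ 0 → ∃ r : R, r • x ∈ A' ∧ r • x ≠ 0} with hs
  have hzorn1 : ∀ c ⊆ s, IsChain (· ≤ ·) c → ∀ y ∈ c, ∃ ub ∈ s, ∀ z ∈ c, z ≤ ub := by
    intro c hcs hchain y hyc
    refine ⟨sSup c, ⟨le_trans (hcs hyc).1 (le_sSup hyc), ?_⟩, fun z hz => le_sSup hz⟩
    intro x hx hx0
    obtain ⟨W, hWc, hxW⟩ := (Submodule.mem_sSup_of_directed ⟨y, hyc⟩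
      (hchain.directedOn)).mp hx
    exact (hcs hWc).2 x hxW hx0
  obtain ⟨Em, -, hEmmem, hEmmax⟩ :
      ∃ Em, A' ≤ Em ∧ Em ∈ s ∧ ∀ W ∈ s, Em ≤ W → W ≤ Em := by
    obtain ⟨Em, hle, hmax⟩ := zorn_le_nonempty₀ s hzorn1 A'
      ⟨le_rfl, fun x hx hx0 => ⟨1, by simpa using ⟨hx, hx0⟩⟩⟩
    exact ⟨Em, hle, hmax.1, fun W hW hle' => hmax.2 hW hle'⟩
  -- complement
  have hzorn2 : ∀ c ⊆ {C : Submodule R I | C ⊓ Em = ⊥}, IsChain (· ≤ ·) c → ∀ y ∈ c,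
      ∃ ub ∈ {C : Submodule R I | C ⊓ Em = ⊥}, ∀ z ∈ c, z ≤ ub := by
    intro c hcs hchain y hyc
    refine ⟨sSup c, ?_, fun z hz => le_sSup hz⟩
    rw [Set.mem_setOf_eq, eq_bot_iff]
    rintro x ⟨hx1, hx2⟩
    obtain ⟨W, hWc, hxW⟩ := (Submodule.mem_sSup_of_directed ⟨y, hyc⟩
      (hchain.directedOn)).mp hx1
    have hxmem : x ∈ W ⊓ Em := ⟨hxW, hx2⟩
    rwa [hcs hWc] at hxmem
  obtain ⟨C, hCmem, hCmax⟩ : ∃ C : Submodule R I, C ⊓ Em = ⊥ ∧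
      ∀ C', C' ⊓ Em = ⊥ → C ≤ C' → C' ≤ C := by
    obtain ⟨C, -, hmax⟩ := zorn_le_nonempty₀ {C : Submodule R I | C ⊓ Em = ⊥} hzorn2 ⊥ (by simp)
    exact ⟨C, hmax.1, fun C' h1 h2 => hmax.2 h1 h2⟩
  have hA'le : A' ≤ Em := hEmmem.1
  have hEmess : ∀ x ∈ Em, x ≠ 0 → ∃ r : R, r • x ∈ A' ∧ r • x ≠ 0 := hEmmem.2
  set π : I →ₗ[R] I ⧸ C := C.mkQ with hπ
  set ρ : ↥Em →ₗ[R] I ⧸ C := π.comp Em.subtype with hρ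
  have hρinj : Function.Injective ρ := by
    intro a b hab
    have hab2 : C.mkQ (a : I) = C.mkQ (b : I) := hab
    rw [Submodule.mkQ_apply, Submodule.mkQ_apply, Submodule.Quotient.eq] at hab2
    have hmem : ((a : I) - b) ∈ C ⊓ Em := ⟨hab2, Em.sub_mem a.2 b.2⟩
    rw [hCmem] at hmem
    exact Subtype.ext (sub_eq_zero.mp hmem)
  have hzeroC : ∀ z : I, z ∈ Em → z ≠ 0 → π z ≠ 0 := by
    intro z hz hz0 h0
    rw [hπ, Submodule.mkQ_apply, Submodule.Quotient.mk_eq_zero] at h0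
    have hmem : z ∈ C ⊓ Em := ⟨h0, hz⟩
    rw [hCmem] at hmem
    exact hz0 hmem
  have hTess : ∀ y : I ⧸ C, y ≠ 0 → ∃ r : R, r • y ∈ LinearMap.range ρ ∧ r • y ≠ 0 := by
    intro y hy
    obtain ⟨d, rfl⟩ := Submodule.mkQ_surjective C y
    have hdC : d ∉ C := fun h => hy (by simpa [Submodule.Quotient.mk_eq_zero] using h)
    have hne : ¬ ((C ⊔ R ∙ d) ⊓ Em = ⊥) := by
      intro h
      exact hdC (hCmax _ h le_sup_left (Submodule.mem_sup_right (Submodule.mem_span_singleton_self d)))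
    obtain ⟨z, hzmem, hz0⟩ := Submodule.exists_mem_ne_zero_of_ne_bot hne
    obtain ⟨hz1, hz2⟩ := hzmem
    obtain ⟨cc, hcc, e, he, hze⟩ := Submodule.mem_sup.mp hz1
    obtain ⟨r, rfl⟩ := Submodule.mem_span_singleton.mp he
    have hπz : π z = r • (C.mkQ d) := by
      rw [← hze, map_add, map_smul]
      have : π cc = 0 := (Submodule.Quotient.mk_eq_zero C).mpr hcc
      rw [hπ] at this ⊢
      rw [this, zero_add]
    refine ⟨r, ⟨⟨z, hz2⟩, hπz⟩, ?_⟩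
    rw [← hπz]; exact hzeroC z hz2 hz0
  obtain ⟨ψ, hψ⟩ := hI.out (LinearMap.range ρ).subtype (Submodule.injective_subtype _)
      (Em.subtype.comp ((LinearEquiv.ofInjective ρ hρinj).symm : ↥(LinearMap.range ρ) →ₗ[R] ↥Em))
  have hψE : ∀ z : ↥Em, ψ (ρ z) = (z : I) := by
    intro z
    have h1 : (LinearEquiv.ofInjective ρ hρinj).symm ⟨ρ z, ⟨z, rfl⟩⟩ = z := by
      rw [LinearEquiv.symm_apply_eq]
      rfl
    have := hψ ⟨ρ z, ⟨z, rfl⟩⟩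
    simpa [h1] using this
  have hψinj : ∀ y : I ⧸ C, ψ y = 0 → y = 0 := by
    intro y hy0
    by_contra hy
    obtain ⟨r, hmem, hne⟩ := hTess y hy
    obtain ⟨z, hz⟩ := hmem
    have h2 : ψ (ρ z) = (z : I) := hψE z
    rw [hz, map_smul, hy0, smul_zero] at h2
    have hz0 : z = 0 := Subtype.ext h2.symm
    rw [hz0, map_zero] at hz
    exact hne hz.symm
  set θ : I →ₗ[R] I := ψ.comp π with hθ
  have hθE : ∀ x ∈ Em, θ x = x := fun x hx => hψE ⟨x, hx⟩
  have hrange : LinearMap.range θ = Em := by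
    apply le_antisymm
    · have hsmem : LinearMap.range θ ∈ s := by
        constructor
        · exact fun a ha => (hθE a (hA'le ha)) ▸ LinearMap.mem_range_self θ a
        · rintro x ⟨d, rfl⟩ hx0
          have hπd : π d ≠ 0 := by
            intro h; rw [hθ] at hx0; apply hx0; simp only [LinearMap.comp_apply, h, map_zero]
          obtain ⟨r, ⟨z, hz⟩, hne⟩ := hTess (π d) hπd
          have hzval : r • θ d = (z : I) := by
            calc r • θ d = ψ (r • π d) := by rw [map_smul]; rfl
              _ = ψ (ρ z) := by rw [hz]
              _ = (z : I) := hψE z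
          have hz0 : (z : I) ≠ 0 := by
            intro h
            have hzz : z = 0 := Subtype.ext h
            rw [hzz, map_zero] at hz
            exact hne hz.symm
          obtain ⟨r', hr1, hr2⟩ := hEmess (z : I) z.2 hz0
          refine ⟨r' * r, ?_, ?_⟩
          · rw [mul_smul, hzval]; exact hr1
          · rw [mul_smul, hzval]; exact hr2
      exact hEmmax _ hsmem (fun a ha => (hθE a ha) ▸ LinearMap.mem_range_self θ a)
    · exact fun a ha => ⟨a, hθE a ha⟩
  set retr : I →ₗ[R] ↥Em := θ.codRestrict Em (fun d => hrange ▸ LinearMap.mem_range_self θ d)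
    with hretrdef
  have hretr : ∀ z : ↥Em, retr (z : I) = z := fun z => Subtype.ext (hθE z z.2)
  have hEminj : Module.Injective R ↥Em := by
    constructor
    intro X Y _ _ _ _ g hg g'
    obtain ⟨h, hh⟩ := hI.out g hg (Em.subtype.comp g')
    refine ⟨retr.comp h, fun x => ?_⟩
    rw [LinearMap.comp_apply, hh x]
    exact hretr (g' x)
  refine ⟨↥Em, inferInstance, inferInstance,
    j.codRestrict Em (fun a => hA'le ⟨a, rfl⟩), hEminj, ?_, ?_⟩
  · intro a b hab
    exact hj (congrArg Subtype.val hab)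
  · intro x hx0
    have hxv : (x : I) ≠ 0 := fun h => hx0 (Subtype.ext h)
    obtain ⟨r, hr1, hr2⟩ := hEmess (x : I) x.2 hxv
    obtain ⟨a, ha⟩ := hr1
    refine ⟨r, ⟨a, ?_⟩, ?_⟩
    · exact Subtype.ext ha
    · intro h
      apply hr2
      have := congrArg Subtype.val h
      simpa using this

lemma isSemisimple_of_isSimple {A : Type u} [AddCommGroup A] [Module R A]
    (h : IsSimpleModule R A) : IsSemisimpleModule R A := by
  apply IsSemisimpleModule.of_sSup_simples_eq_top
  rw [eq_top_iff]
  exact le_sSup (show IsSimpleModule R ↥(⊤ : Submodule R A) from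
    IsSimpleModule.congr Submodule.topEquiv)

lemma exists_simple_cogenerator (Y : Type u) [AddCommGroup Y] [Module R Y] (y : Y) (hy : y ≠ 0) :
    ∃ (E : Type u) (_ : AddCommGroup E) (_ : Module R E), ∃ (S' : Submodule R E),
      Module.Injective R E ∧ IsSimpleModule R ↥S' ∧
      (∀ x : E, x ≠ 0 → ∃ r : R, r • x ∈ S' ∧ r • x ≠ 0) ∧
      ∃ φ : Y →ₗ[R] E, φ y ≠ 0 := by
  set toSpan : R →ₗ[R] Y := LinearMap.toSpanSingleton R Y y with htoSpan
  set ann : Ideal R := LinearMap.ker toSpan with hanndef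
  have hann : ann ≠ ⊤ := by
    intro h
    have h1 : (1 : R) ∈ ann := by rw [h]; trivial
    have : toSpan 1 = 0 := h1
    rw [htoSpan, LinearMap.toSpanSingleton_apply, one_smul] at this
    exact hy this
  obtain ⟨P, hPmax, hPle⟩ := Ideal.exists_le_maximal ann hann
  haveI hsimpleQ : IsSimpleModule R (R ⧸ P) :=
    isSimpleModule_iff_isCoatom.mpr ((Ideal.isMaximal_def).mp hPmax)
  set e := toSpan.quotKerEquivRange with he
  set q : (R ⧸ ann) →ₗ[R] (R ⧸ P) :=
    Submodule.mapQ ann P LinearMap.id (by simpa using hPle) with hq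
  set g₀ : ↥(LinearMap.range toSpan) →ₗ[R] (R ⧸ P) := q ∘ₗ (e.symm : _ →ₗ[R] _) with hg₀
  have hymem : y ∈ LinearMap.range toSpan := ⟨1, by simp [htoSpan]⟩
  have hg₀y : g₀ ⟨y, hymem⟩ = Submodule.Quotient.mk (1 : R) := by
    have h1 : e.symm ⟨y, hymem⟩ = Submodule.Quotient.mk (1 : R) := by
      rw [LinearEquiv.symm_apply_eq]
      apply Subtype.ext
      rw [he, LinearMap.quotKerEquivRange_apply_mk]
      simp [htoSpan]
    rw [hg₀, LinearMap.comp_apply, LinearEquiv.coe_coe, h1, hq, Submodule.mapQ_apply,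
      LinearMap.id_apply]
  have hone : (Submodule.Quotient.mk (1 : R) : R ⧸ P) ≠ 0 := by
    intro h
    rw [Submodule.Quotient.mk_eq_zero] at h
    exact hPmax.ne_top ((Ideal.eq_top_iff_one P).mpr h)
  obtain ⟨E, _, _, i, hEinj, hiinj, hess⟩ :=
    exists_injective_essential_extension (R := R) (R ⧸ P)
  haveI : IsSimpleModule R ↥(LinearMap.range i) :=
    IsSimpleModule.congr (LinearEquiv.ofInjective i hiinj).symm
  obtain ⟨φ, hφ⟩ := hEinj.out (LinearMap.range toSpan).subtype (Submodule.injective_subtype _)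
    (i ∘ₗ g₀)
  refine ⟨E, inferInstance, inferInstance, LinearMap.range i, hEinj, inferInstance, hess, φ, ?_⟩
  have h2 := hφ ⟨y, hymem⟩
  rw [Submodule.coe_subtype] at h2
  rw [show φ y = φ ((⟨y, hymem⟩ : LinearMap.range toSpan) : Y) from rfl, h2,
    LinearMap.comp_apply, hg₀y]
  intro h
  exact hone (hiinj (by rw [h, map_zero]))

lemma injective_pi_of_injective {E : Type u} [AddCommGroup E] [Module R E]
    (hE : Module.Injective R E) (ι : Type u) : Module.Injective R (ι → E) := by
  constructor
  intro X Y _ _ _ _ g hg g'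
  have h := fun (jj : ι) => hE.out g hg ((LinearMap.proj jj).comp g')
  choose h hh using h
  exact ⟨LinearMap.pi h, fun x => funext fun jj => hh jj x⟩

lemma essential_pi {E : Type u} [AddCommGroup E] [Module R E] {S' : Submodule R E}
    (hess : ∀ x : E, x ≠ 0 → ∃ r : R, r • x ∈ S' ∧ r • x ≠ 0)
    {ι : Type u} [Fintype ι] (x : ι → E) (hx : x ≠ 0) :
    ∃ r : R, (∀ j, r • x j ∈ S') ∧ r • x ≠ 0 := by
  classical
  suffices h : ∀ s : Finset ι, ∀ x : ι → E, x ≠ 0 →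
      ∃ r : R, (∀ j ∈ s, r • x j ∈ S') ∧ r • x ≠ 0 by
    obtain ⟨r, h1, h2⟩ := h Finset.univ x hx
    exact ⟨r, fun j => h1 j (Finset.mem_univ j), h2⟩
  intro s
  induction s using Finset.induction_on with
  | empty => exact fun x hx => ⟨1, by simp, by simpa⟩
  | @insert j₀ s hj₀ ih =>
    intro x hx
    obtain ⟨r₁, h1, h2⟩ := ih x hx
    by_cases h0 : r₁ • x j₀ = 0
    · refine ⟨r₁, ?_, h2⟩
      intro j hj
      rcases Finset.mem_insert.mp hj with rfl | hj
      · rw [h0]; exact S'.zero_mem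
      · exact h1 j hj
    · obtain ⟨r₂, h3, h4⟩ := hess (r₁ • x j₀) h0
      refine ⟨r₂ * r₁, ?_, ?_⟩
      · intro j hj
        rcases Finset.mem_insert.mp hj with rfl | hj
        · rw [mul_smul]; exact h3
        · rw [mul_smul]; exact S'.smul_mem r₂ (h1 j hj)
      · intro hzero
        apply h4
        simpa [mul_smul] using congrFun hzero j₀

lemma simple_fg {E : Type u} [AddCommGroup E] [Module R E] {S' : Submodule R E}
    (hsimple : IsSimpleModule R ↥S') : S'.FG := by
  haveI := hsimple
  obtain ⟨⟨x, hx⟩, ⟨y, hy⟩, hxy⟩ := IsSimpleModule.nontrivial R ↥S'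
  have hne : (x : E) ≠ y := fun h => hxy (Subtype.ext h)
  have : ∃ z : E, z ∈ S' ∧ z ≠ 0 := by
    rcases eq_or_ne (x : E) 0 with h | h
    · exact ⟨y, hy, fun h' => hne (by rw [h, h'])⟩
    · exact ⟨x, hx, h⟩
  obtain ⟨z, hz, hz0⟩ := this
  refine ⟨{z}, ?_⟩
  rw [Finset.coe_singleton]
  have hle : Submodule.span R {z} ≤ S' := by
    rw [Submodule.span_le, Set.singleton_subset_iff]; exact hz
  rcases (eq_bot_or_eq_top (Submodule.comap S'.subtype (Submodule.span R {z}))) with h | h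
  · exfalso
    have : (⟨z, hz⟩ : ↥S') ∈ Submodule.comap S'.subtype (Submodule.span R {z}) :=
      Submodule.mem_span_singleton_self z
    rw [h] at this
    exact hz0 (congrArg Subtype.val this)
  · apply le_antisymm hle
    intro w hw
    have : (⟨w, hw⟩ : ↥S') ∈ Submodule.comap S'.subtype (Submodule.span R {z}) := by
      rw [h]; trivial
    exact this

lemma semisimple_pi {A : Type u} [AddCommGroup A] [Module R A]
    (hA : IsSemisimpleModule R A) (ι : Type u) [Fintype ι] :
    IsSemisimpleModule R (ι → A) := by
  classical
  refine isSemisimpleModule_of_isSemisimpleModule_submodule'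
    (p := fun j => LinearMap.range (LinearMap.single R (fun _ : ι => A) j)) (fun j => ?_) ?_
  · have hinj : Function.Injective (LinearMap.single R (fun _ : ι => A) j) := by
      intro a b hab
      have := congrFun (congrArg (fun g => (g : ι → A)) hab) j
      simpa using this
    exact IsSemisimpleModule.congr (LinearEquiv.ofInjective _ hinj).symm
  · exact LinearMap.iSup_range_single R (fun _ : ι => A)

/-- The pi-submodule is equivalent to the pi of the submodule. -/
def piSubEquiv {E : Type u} [AddCommGroup E] [Module R E] (S' : Submodule R E)
    (ι : Type u) :
    ↥(Submodule.pi (Set.univ : Set ι) (fun _ => S')) ≃ₗ[R] (ι → ↥S') where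
  toFun x := fun j => ⟨x.1 j, x.2 j (Set.mem_univ j)⟩
  map_add' x y := rfl
  map_smul' r x := rfl
  invFun y := ⟨fun j => (y j).1, fun j _ => (y j).2⟩
  left_inv x := rfl
  right_inv y := rfl

lemma finitelyEmbedded_of_embedding {E : Type u} [AddCommGroup E] [Module R E]
    {S' : Submodule R E}
    (hEinj : Module.Injective R E) (hsimple : IsSimpleModule R ↥S')
    (hess : ∀ x : E, x ≠ 0 → ∃ r : R, r • x ∈ S' ∧ r • x ≠ 0)
    (ι : Type u) [Fintype ι] (N : Type u) [AddCommGroup N] [Module R N]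
    (g : N →ₗ[R] (ι → E)) (hg : Function.Injective g) :
    FinitelyEmbedded R N := by
  refine ⟨ModuleCat.of R (ι → E), injective_pi_of_injective hEinj ι,
    Submodule.pi Set.univ (fun _ => S'), ?_, ?_, ?_, g, hg⟩
  · haveI : IsSemisimpleModule R (ι → ↥S') :=
      semisimple_pi (isSemisimple_of_isSimple hsimple) ι
    exact IsSemisimpleModule.congr (piSubEquiv S' ι)
  · exact Submodule.fg_pi (fun _ => simple_fg hsimple)
  · intro P hP
    obtain ⟨x, hxP, hx0⟩ := Submodule.exists_mem_ne_zero_of_ne_bot hP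
    obtain ⟨r, h1, h2⟩ := essential_pi hess x hx0
    rw [Submodule.ne_bot_iff]
    exact ⟨r • x, ⟨Submodule.mem_pi.mpr (fun j _ => h1 j), P.smul_mem r hxP⟩, h2⟩

lemma rTensor_injective_of_finite (M : Type u) [AddCommGroup M] [Module R M]
    (L' : Type u) [AddCommGroup L'] [Module R L'] [Module.Finite R L'] :
    Function.Injective (LinearMap.rTensor L' (toFinitelyEmbeddedQuotients R M)) := by
  classical
  set f := toFinitelyEmbeddedQuotients R M with hf
  rw [← LinearMap.ker_eq_bot, eq_bot_iff]
  intro t ht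
  rw [LinearMap.mem_ker] at ht
  rw [Submodule.mem_bot (R := R)]
  by_contra hne
  obtain ⟨E, _, _, S', hEinj, hsimple, hess, φ, hφ⟩ :=
    exists_simple_cogenerator (R := R) (M ⊗[R] L') t hne
  set ψ : M →ₗ[R] (L' →ₗ[R] E) := TensorProduct.curry φ with hψ
  set K := LinearMap.ker ψ with hK
  set ι1 : (M ⧸ K) →ₗ[R] (L' →ₗ[R] E) := K.liftQ ψ le_rfl with hι1def
  have hι1 : Function.Injective ι1 := by
    rw [← LinearMap.ker_eq_bot]
    exact Submodule.ker_liftQ_eq_bot _ _ _ le_rfl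
  obtain ⟨s, hs⟩ := Module.Finite.fg_top (R := R) (M := L')
  set ev : (L' →ₗ[R] E) →ₗ[R] ({x // x ∈ s} → E) :=
    LinearMap.pi (fun j => LinearMap.applyₗ (j : L')) with hev
  have hevinj : Function.Injective ev := by
    intro g1 g2 h12
    ext x
    have hx : x ∈ (⊤ : Submodule R L') := trivial
    rw [← hs] at hx
    induction hx using Submodule.span_induction with
    | mem z hz => exact congrFun h12 ⟨z, hz⟩
    | zero => simp
    | add a b _ _ ha hb => simp [ha, hb]
    | smul r a _ ha => simp [ha]
  have hFE : FinitelyEmbedded R (M ⧸ K) :=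
    finitelyEmbedded_of_embedding hEinj hsimple hess _ _ (ev ∘ₗ ι1) (hevinj.comp hι1)
  set k : {K' : Submodule R M // FinitelyEmbedded R (M ⧸ K')} := ⟨K, hFE⟩ with hk
  set Θ : (∀ K' : {K' : Submodule R M // FinitelyEmbedded R (M ⧸ K')}, M ⧸ K'.1)
      →ₗ[R] (L' →ₗ[R] E) := ι1 ∘ₗ LinearMap.proj k with hΘ
  have hΘf : ∀ m : M, Θ (f m) = ψ m := by
    intro m
    show ι1 (K.mkQ m) = ψ m
    rw [hι1def]
    exact LinearMap.congr_fun (Submodule.liftQ_mkQ K ψ le_rfl) m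
  have hcomp : (TensorProduct.lift Θ) ∘ₗ (LinearMap.rTensor L' f) = φ := by
    apply TensorProduct.ext'
    intro x l
    rw [LinearMap.comp_apply, LinearMap.rTensor_tmul, TensorProduct.lift.tmul, hΘf x]
    rfl
  apply hφ
  have : φ t = (TensorProduct.lift Θ) (LinearMap.rTensor L' f t) := by
    rw [← hcomp]; rfl
  rw [this, ht, map_zero]

lemma injective_toFE (M : Type u) [AddCommGroup M] [Module R M] :
    Function.Injective (toFinitelyEmbeddedQuotients R M) := by
  set f := toFinitelyEmbeddedQuotients R M with hf
  rw [← LinearMap.ker_eq_bot, eq_bot_iff]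
  intro m hm
  rw [LinearMap.mem_ker] at hm
  rw [Submodule.mem_bot (R := R)]
  by_contra hm0
  obtain ⟨E, _, _, S', hEinj, hsimple, hess, φ, hφ⟩ := exists_simple_cogenerator (R := R) M m hm0
  set K := LinearMap.ker φ with hK
  set ι1 : (M ⧸ K) →ₗ[R] E := K.liftQ φ le_rfl with hι1def
  have hι1 : Function.Injective ι1 := by
    rw [← LinearMap.ker_eq_bot]
    exact Submodule.ker_liftQ_eq_bot _ _ _ le_rfl
  set cmap : E →ₗ[R] (PUnit.{u+1} → E) := LinearMap.pi (fun _ => LinearMap.id) with hcmap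
  have hcinj : Function.Injective cmap := by
    intro a b hab
    exact congrFun hab PUnit.unit
  have hFE : FinitelyEmbedded R (M ⧸ K) :=
    finitelyEmbedded_of_embedding hEinj hsimple hess _ _ (cmap ∘ₗ ι1) (hcinj.comp hι1)
  set k : {K' : Submodule R M // FinitelyEmbedded R (M ⧸ K')} := ⟨K, hFE⟩ with hk
  have h1 : f m k = K.mkQ m := rfl
  rw [hm] at h1
  have h2 : K.mkQ m = 0 := h1.symm
  rw [Submodule.mkQ_apply, Submodule.Quotient.mk_eq_zero] at h2
  exact hφ h2

lemma vanish_at_fg_stage (L : Type u) [AddCommGroup L] [Module R L]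
    (X : Type u) [AddCommGroup X] [Module R X]
    (L₁ : Submodule R L) (hL₁ : L₁.FG) (u : X ⊗[R] ↥L₁)
    (h : LinearMap.lTensor X L₁.subtype u = 0) :
    ∃ (L₂ : Submodule R L) (_ : L₂.FG) (hle : L₁ ≤ L₂),
      LinearMap.lTensor X (Submodule.inclusion hle) u = 0 := by
  classical
  let Ω := {p : Submodule R L // p.FG ∧ L₁ ≤ p}
  haveI : Nonempty Ω := ⟨⟨L₁, hL₁, le_rfl⟩⟩
  haveI : IsDirected Ω (· ≤ ·) := by
    constructor
    intro p q
    refine ⟨⟨p.1 ⊔ q.1, p.2.1.sup q.2.1, le_trans p.2.2 le_sup_left⟩, ?_, ?_⟩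
    · exact (le_sup_left : p.1 ≤ p.1 ⊔ q.1)
    · exact (le_sup_right : q.1 ≤ p.1 ⊔ q.1)
  let G : Ω → Type u := fun p => ↥p.1
  let gmap : ∀ p q : Ω, p ≤ q → G p →ₗ[R] G q := fun p q h => Submodule.inclusion h
  have hId : ∀ (p : Ω) (h : p.1 ≤ p.1), Submodule.inclusion h = LinearMap.id (M := ↥p.1) :=
    fun p h => rfl
  haveI hdir : DirectedSystem G (fun p q h => gmap p q h) := by
    constructor
    · intro p x; rfl
    · intro r q p hpq hqr x; rfl
  let 𝕃 := Module.DirectLimit G gmap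
  let lam : 𝕃 →ₗ[R] L := Module.DirectLimit.lift R Ω G gmap (fun p => p.1.subtype)
    (fun p q hpq x => rfl)
  have hlam_of : ∀ (p : Ω) (x : G p), lam (Module.DirectLimit.of R Ω G gmap p x) = (x : L) :=
    fun p x => Module.DirectLimit.lift_of _ _ _
  have hbij : Function.Bijective lam := by
    constructor
    · have hker : ∀ z : 𝕃, lam z = 0 → z = 0 := by
        intro z hz
        obtain ⟨p, x, rfl⟩ := Module.DirectLimit.exists_of z
        rw [hlam_of] at hz
        have : x = 0 := Subtype.ext hz
        rw [this, map_zero]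
      intro a b hab
      have : lam (a - b) = 0 := by rw [map_sub, hab, sub_self]
      have := hker _ this
      rwa [sub_eq_zero] at this
    · intro l
      refine ⟨Module.DirectLimit.of R Ω G gmap
        ⟨L₁ ⊔ Submodule.span R {l}, hL₁.sup (Submodule.fg_span_singleton l), le_sup_left⟩
        ⟨l, Submodule.mem_sup_right (Submodule.mem_span_singleton_self l)⟩, ?_⟩
      exact hlam_of _ _
  let eL : 𝕃 ≃ₗ[R] L := LinearEquiv.ofBijective lam hbij
  haveI hdir2 : DirectedSystem (fun p => X ⊗[R] G p)
      (fun p q h => LinearMap.lTensor X (gmap p q h)) := by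
    constructor
    · intro p x
      have heq : LinearMap.lTensor X (gmap p p le_rfl) = LinearMap.id := by
        rw [show gmap p p le_rfl = LinearMap.id from rfl, LinearMap.lTensor_id]
      rw [heq]; rfl
    · intro r q p hpq hqr x
      have heq : LinearMap.lTensor X (gmap q r hqr) ∘ₗ LinearMap.lTensor X (gmap p q hpq)
          = LinearMap.lTensor X (gmap p r (le_trans hpq hqr)) := by
        rw [← LinearMap.lTensor_comp]
        exact congrArg (LinearMap.lTensor X) (by ext z; rfl)
      exact LinearMap.congr_fun heq x
  let c : (X ⊗[R] L) ≃ₗ[R] Module.DirectLimit (fun p => X ⊗[R] G p)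
      (fun p q h => LinearMap.lTensor X (gmap p q h)) :=
    (TensorProduct.congr (LinearEquiv.refl R X) eL.symm).trans
      (TensorProduct.directLimitRight gmap X)
  have hc : ∀ (p : Ω) (w : X ⊗[R] G p),
      c (LinearMap.lTensor X (p.1.subtype) w) =
        Module.DirectLimit.of R Ω (fun p => X ⊗[R] G p)
          (fun p q h => LinearMap.lTensor X (gmap p q h)) p w := by
    intro p w
    induction w using TensorProduct.induction_on with
    | zero => simp
    | tmul x m =>
      have h1 : eL.symm ((m : L)) = Module.DirectLimit.of R Ω G gmap p m := by
        rw [LinearEquiv.symm_apply_eq]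
        exact (hlam_of p m).symm
      show c (x ⊗ₜ[R] ((m : L))) = _
      show (TensorProduct.directLimitRight gmap X)
        ((TensorProduct.congr (LinearEquiv.refl R X) eL.symm) (x ⊗ₜ[R] ((m : L)))) = _
      rw [TensorProduct.congr_tmul, h1]
      exact TensorProduct.directLimitRight_tmul_of gmap X x m
    | add a b ha hb =>
      rw [map_add, map_add, ha, hb, map_add]
  have h0 : c (LinearMap.lTensor X (L₁.subtype) u) = 0 := by rw [h, map_zero]
  have h1 := hc ⟨L₁, hL₁, le_rfl⟩ u
  rw [h0] at h1
  obtain ⟨q, hq, hq0⟩ := Module.DirectLimit.of.zero_exact h1.symm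
  exact ⟨q.1, q.2.1, hq, hq0⟩

theorem toFinitelyEmbeddedQuotients_pure' (M : Type u)
    [AddCommGroup M] [Module R M] :
    IsPureMono R (toFinitelyEmbeddedQuotients R M) := by
  constructor
  · exact injective_toFE M
  · intro L _ _
    set f := toFinitelyEmbeddedQuotients R M with hf
    set X := (∀ K : {K : Submodule R M // FinitelyEmbedded R (M ⧸ K)}, M ⧸ K.1) with hX
    rw [← LinearMap.ker_eq_bot, eq_bot_iff]
    intro t ht
    rw [LinearMap.mem_ker] at ht
    rw [Submodule.mem_bot (R := R)]
    obtain ⟨L₁, hfin, hsub⟩ := TensorProduct.exists_finite_submodule_right_of_setFinite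
      ({t} : Set (M ⊗[R] L)) (Set.finite_singleton t)
    obtain ⟨t₁, ht₁⟩ := hsub (Set.mem_singleton t)
    have hnat1 : LinearMap.rTensor L f (LinearMap.lTensor M L₁.subtype t₁)
        = LinearMap.lTensor X L₁.subtype (LinearMap.rTensor (↥L₁) f t₁) := by
      have e1 : (LinearMap.rTensor L f).comp (LinearMap.lTensor M L₁.subtype)
          = (LinearMap.lTensor X L₁.subtype).comp (LinearMap.rTensor (↥L₁) f) := by
        rw [LinearMap.rTensor_comp_lTensor, LinearMap.lTensor_comp_rTensor]
      exact LinearMap.congr_fun e1 t₁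
    have h0 : LinearMap.lTensor X L₁.subtype (LinearMap.rTensor (↥L₁) f t₁) = 0 := by
      rw [← hnat1]
      have : LinearMap.lTensor M L₁.subtype t₁ = t := ht₁
      rw [this, ht]
    obtain ⟨L₂, hfg₂, hle, hvan⟩ := vanish_at_fg_stage L X L₁
      (Module.Finite.iff_fg.mp hfin) _ h0
    have hnat2 : LinearMap.rTensor (↥L₂) f (LinearMap.lTensor M (Submodule.inclusion hle) t₁)
        = LinearMap.lTensor X (Submodule.inclusion hle) (LinearMap.rTensor (↥L₁) f t₁) := by
      have e2 : (LinearMap.rTensor (↥L₂) f).comp (LinearMap.lTensor M (Submodule.inclusion hle))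
          = (LinearMap.lTensor X (Submodule.inclusion hle)).comp
            (LinearMap.rTensor (↥L₁) f) := by
        rw [LinearMap.rTensor_comp_lTensor, LinearMap.lTensor_comp_rTensor]
      exact LinearMap.congr_fun e2 t₁
    haveI : Module.Finite R ↥L₂ := Module.Finite.iff_fg.mpr hfg₂
    have ht₂ : LinearMap.lTensor M (Submodule.inclusion hle) t₁ = 0 := by
      apply rTensor_injective_of_finite M (↥L₂)
      rw [hnat2, hvan, map_zero]
    have hfinal : t = LinearMap.lTensor M L₂.subtype
        (LinearMap.lTensor M (Submodule.inclusion hle) t₁) := by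
      have e3 : (LinearMap.lTensor M L₂.subtype).comp
          (LinearMap.lTensor M (Submodule.inclusion hle)) = LinearMap.lTensor M L₁.subtype := by
        rw [← LinearMap.lTensor_comp]
        congr 1
      rw [← ht₁]
      exact (LinearMap.congr_fun e3 t₁).symm
    rw [hfinal, ht₂, map_zero]

end Aux

theorem toFinitelyEmbeddedQuotients_pure (R : Type u) [CommRing R] (M : Type u)
    [AddCommGroup M] [Module R M] :
    IsPureMono R (toFinitelyEmbeddedQuotients R M) := by
  exact toFinitelyEmbeddedQuotients_pure' M
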